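/- Let m, d be integers with 1 ≤ m ≤ d, and let g : ℝ² → ℝ be real-analytic on a neighborhood of the origin with convergent power series g(α, τ) = Σ_{i,k ≥ 0} a_{ik} α^i τ^k. Assume: (a) a_{0k} = 0 for all k < d and a_{0d} ≠ 0; (b) a_{ik} = 0 for all i ≥ 1 and k < d − m, and a_{1,d−m} ≠ 0. Then there exist ε > 0 and a real-analytic function η : (−ε, ε) → ℝ with η(0) = −a_{0d}/a_{1,d−m} such that g(η(τ) τ^m, τ) = 0 for all |τ| < ε. In particular, the root α*(τ) := η(τ) τ^m satisfies α*(τ) = −(a_{0d}/a_{1,d−m}) τ^m + O(τ^{m+1}) as τ → 0. -/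

import Mathlib

open scoped Topology ENNReal NNReal

noncomputable def auxMono (n i : ℕ) : ContinuousMultilinearMap ℝ (fun _ : Fin n => ℝ × ℝ) ℝ :=
  (ContinuousMultilinearMap.mkPiAlgebra ℝ (Fin n) ℝ).compContinuousLinearMap
    (fun s => if (s : ℕ) < i then ContinuousLinearMap.fst ℝ ℝ ℝ else ContinuousLinearMap.snd ℝ ℝ ℝ)

lemma auxMono_norm (n i : ℕ) : ‖auxMono n i‖ ≤ 1 := by
  refine le_trans (ContinuousMultilinearMap.norm_compContinuousLinearMap_le _ _) ?_
  rw [ContinuousMultilinearMap.norm_mkPiAlgebra, one_mul]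
  refine Finset.prod_le_one (fun s _ => norm_nonneg _) (fun s _ => ?_)
  split
  · exact ContinuousLinearMap.opNorm_le_bound _ zero_le_one (fun x => by simpa using norm_fst_le x)
  · exact ContinuousLinearMap.opNorm_le_bound _ zero_le_one (fun x => by simpa using norm_snd_le x)

lemma auxMono_apply (n i : ℕ) (hi : i ≤ n) (y : ℝ × ℝ) :
    (auxMono n i) (fun _ => y) = y.1 ^ i * y.2 ^ (n - i) := by
  simp only [auxMono, ContinuousMultilinearMap.compContinuousLinearMap_apply,
    ContinuousMultilinearMap.mkPiAlgebra_apply]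
  have h1 : ∀ s : Fin n, (if (s : ℕ) < i then ContinuousLinearMap.fst ℝ ℝ ℝ else
      ContinuousLinearMap.snd ℝ ℝ ℝ) y = (if (s : ℕ) < i then y.1 else y.2) := by
    intro s; split <;> rfl
  simp only [h1]
  rw [Fin.prod_univ_eq_prod_range (fun s => if s < i then y.1 else y.2) n]
  rw [Finset.prod_ite]
  have h2 : (Finset.range n).filter (fun s => s < i) = Finset.range i := by
    ext x; simp only [Finset.mem_filter, Finset.mem_range]; omega
  have h3 : ((Finset.range n).filter (fun s => ¬ s < i)).card = n - i := by
    have := Finset.card_filter_add_card_filter_not (s := Finset.range n)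
      (p := fun s => s < i)
    have h2c : ((Finset.range n).filter (fun s => s < i)).card = i := by rw [h2]; simp
    simp only [Finset.card_range] at this
    omega
  rw [Finset.prod_const, Finset.prod_const, h2, h3, Finset.card_range]

lemma auxDiag (w : ℕ × ℕ → ℝ) (hw : Summable w) :
    HasSum (fun n => ∑ p ∈ Finset.HasAntidiagonal.antidiagonal n, w p) (∑' p, w p) := by
  have h1 : HasSum (w ∘ Finset.HasAntidiagonal.sigmaAntidiagonalEquivProd) (∑' p, w p) :=
    (Finset.HasAntidiagonal.sigmaAntidiagonalEquivProd.hasSum_iff).mpr hw.hasSum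
  refine HasSum.sigma h1 (fun n => ?_)
  have := hasSum_fintype (fun c : (Finset.HasAntidiagonal.antidiagonal n : Finset (ℕ × ℕ)) =>
    (w ∘ Finset.HasAntidiagonal.sigmaAntidiagonalEquivProd) ⟨n, c⟩)
  simpa [Finset.sum_attach] using this

lemma aux_summable (c : ℕ → ℕ → ℝ) (hc : Summable fun p : ℕ × ℕ => |c p.1 p.2|) (y : ℝ × ℝ)
    (hy1 : |y.1| ≤ 1) (hy2 : |y.2| ≤ 1) :
    Summable (fun p : ℕ × ℕ => c p.1 p.2 * y.1 ^ p.1 * y.2 ^ p.2) := by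
  refine Summable.of_norm_bounded hc (fun p => ?_)
  have h : ‖c p.1 p.2 * y.1 ^ p.1 * y.2 ^ p.2‖ = |c p.1 p.2| * (|y.1| ^ p.1 * |y.2| ^ p.2) := by
    simp [abs_mul, abs_pow, mul_assoc]
  rw [h]
  refine mul_le_of_le_one_right (abs_nonneg _) ?_
  exact mul_le_one₀ (pow_le_one₀ (abs_nonneg _) hy1) (pow_nonneg (abs_nonneg _) _)
    (pow_le_one₀ (abs_nonneg _) hy2)

noncomputable def auxSeries (c : ℕ → ℕ → ℝ) : FormalMultilinearSeries ℝ (ℝ × ℝ) ℝ :=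
  fun n => ∑ i ∈ Finset.range (n + 1), c i (n - i) • auxMono n i

lemma auxSeries_norm (c : ℕ → ℕ → ℝ) (hc : Summable fun p : ℕ × ℕ => |c p.1 p.2|) (n : ℕ) :
    ‖auxSeries c n‖ ≤ ∑' p : ℕ × ℕ, |c p.1 p.2| := by
  refine le_trans (norm_sum_le _ _) ?_
  have h1 : ∀ i ∈ Finset.range (n + 1), ‖c i (n - i) • auxMono n i‖ ≤ |c i (n - i)| := by
    intro i _
    refine le_trans (ContinuousMultilinearMap.opNorm_smul_le _ _) ?_
    rw [Real.norm_eq_abs]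
    exact mul_le_of_le_one_right (abs_nonneg _) (auxMono_norm n i)
  refine le_trans (Finset.sum_le_sum h1) ?_
  have h2 : ∑ i ∈ Finset.range (n + 1), |c i (n - i)|
      = ∑ p ∈ Finset.HasAntidiagonal.antidiagonal n, |c p.1 p.2| := by
    rw [Finset.Nat.sum_antidiagonal_eq_sum_range_succ_mk]
  rw [h2]
  exact Summable.sum_le_tsum _ (fun p _ => abs_nonneg _) hc

lemma auxSeries_apply (c : ℕ → ℕ → ℝ) (n : ℕ) (y : ℝ × ℝ) :
    (auxSeries c n) (fun _ => y)
      = ∑ p ∈ Finset.HasAntidiagonal.antidiagonal n, c p.1 p.2 * y.1 ^ p.1 * y.2 ^ p.2 := by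
  rw [Finset.Nat.sum_antidiagonal_eq_sum_range_succ_mk]
  rw [auxSeries, ContinuousMultilinearMap.sum_apply]
  refine Finset.sum_congr rfl (fun i hi => ?_)
  rw [ContinuousMultilinearMap.smul_apply, auxMono_apply n i (by
    simpa using Nat.lt_succ_iff.mp (Finset.mem_range.mp hi)), smul_eq_mul, mul_assoc]

lemma aux_hasFPS (c : ℕ → ℕ → ℝ) (hc : Summable fun p : ℕ × ℕ => |c p.1 p.2|) :
    HasFPowerSeriesOnBall (fun x : ℝ × ℝ => ∑' p : ℕ × ℕ, c p.1 p.2 * x.1 ^ p.1 * x.2 ^ p.2)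
      (auxSeries c) 0 1 := by
  constructor
  · have h1 : (1 : ℝ≥0∞) = ((1 : NNReal) : ℝ≥0∞) := by norm_num
    rw [h1]
    refine FormalMultilinearSeries.le_radius_of_bound _ (∑' p : ℕ × ℕ, |c p.1 p.2|) (fun n => ?_)
    rw [NNReal.coe_one, one_pow, mul_one]
    exact auxSeries_norm c hc n
  · exact one_pos
  · intro y hy
    rw [EMetric.mem_ball, edist_zero_right] at hy
    have h2 : ‖y‖ < 1 := by simpa [← ofReal_norm] using hy
    have hy1 : |y.1| ≤ 1 := le_of_lt (lt_of_le_of_lt (norm_fst_le y) h2)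
    have hy2 : |y.2| ≤ 1 := le_of_lt (lt_of_le_of_lt (norm_snd_le y) h2)
    have hsw := aux_summable c hc y hy1 hy2
    have hd := auxDiag _ hsw
    have heq : (fun n => (auxSeries c n) (fun _ => y))
        = (fun n => ∑ p ∈ Finset.HasAntidiagonal.antidiagonal n,
            c p.1 p.2 * y.1 ^ p.1 * y.2 ^ p.2) := by
      funext n; exact auxSeries_apply c n y
    rw [zero_add, heq]
    exact hd

/-- **Existence of an analytic root branch `α*(τ) = η(τ)τᵐ` of an analytic function.**
Let `g(α,τ) = Σ a_{ik} αⁱτᵏ` be given by a power series convergent near the origin with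
`a_{0k} = 0` for `k < d`, `a_{0d} ≠ 0`, `a_{ik} = 0` for `i ≥ 1`, `k < d − m`, and
`a_{1,d−m} ≠ 0`. Then there is an analytic `η` on `(−ε,ε)` with `η(0) = −a_{0d}/a_{1,d−m}`
such that `g(η(τ)τᵐ, τ) = 0`; in particular
`α*(τ) = η(τ)τᵐ = −(a_{0d}/a_{1,d−m}) τᵐ + O(τ^{m+1})`. -/
theorem stmt14 (m d : ℕ) (hm : 1 ≤ m) (hmd : m ≤ d)
    (g : ℝ → ℝ → ℝ) (a : ℕ → ℕ → ℝ)
    (hconv : ∃ ρ > (0 : ℝ), ∀ α τ : ℝ, |α| < ρ → |τ| < ρ →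
      HasSum (fun p : ℕ × ℕ => a p.1 p.2 * α ^ p.1 * τ ^ p.2) (g α τ))
    (ha0 : ∀ k : ℕ, k < d → a 0 k = 0) (ha0d : a 0 d ≠ 0)
    (hai : ∀ i k : ℕ, 1 ≤ i → k < d - m → a i k = 0) (ha1 : a 1 (d - m) ≠ 0) :
    ∃ ε > (0 : ℝ), ∃ η : ℝ → ℝ,
      AnalyticOnNhd ℝ η (Set.Ioo (-ε) ε)
      ∧ η 0 = -(a 0 d / a 1 (d - m))
      ∧ (∀ τ : ℝ, |τ| < ε → g (η τ * τ ^ m) τ = 0)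
      ∧ (fun τ : ℝ => η τ * τ ^ m - (-(a 0 d / a 1 (d - m))) * τ ^ m)
          =O[𝓝 0] fun τ : ℝ => τ ^ (m + 1) := by
  obtain ⟨ρ, hρ, hg⟩ := hconv
  set A1 : ℝ := a 1 (d - m) with hA1
  set β₀ : ℝ := -(a 0 d / A1) with hβ₀
  set s : ℝ := |β₀| + 1 with hsdef
  have hs : 0 < s := by positivity
  have hβ₀s : |β₀| < s := by rw [hsdef]; linarith
  have hs1 : 1 ≤ s := by rw [hsdef]; have := abs_nonneg β₀; linarith
  set t : ℝ := min 1 (min (ρ/2) (ρ/(2*s))) with htdef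
  have ht : 0 < t := by
    rw [htdef]
    refine lt_min one_pos (lt_min (by linarith) (by positivity))
  have ht1 : t ≤ 1 := by rw [htdef]; exact min_le_left _ _
  have htρ : t < ρ := by
    have : t ≤ ρ/2 := le_trans (min_le_right _ _) (min_le_left _ _)
    linarith
  have hstm : s * t ^ m < ρ := by
    have h1 : t ^ m ≤ t := by
      calc t ^ m ≤ t ^ 1 := pow_le_pow_of_le_one ht.le ht1 hm
        _ = t := pow_one t
    have h2 : t ≤ ρ/(2*s) := le_trans (min_le_right _ _) (min_le_right _ _)
    have h3 : s * t ^ m ≤ s * t := by nlinarith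
    have h4 : s * t ≤ ρ/2 := by
      rw [le_div_iff₀ (show (0:ℝ) < 2*s by positivity)] at h2
      nlinarith
    calc s * t ^ m ≤ s * t := h3
      _ ≤ ρ/2 := h4
      _ < ρ := by linarith
  -- absolute summability of the original double series
  have habs : ∀ u v : ℝ, 0 < u → u < ρ → 0 < v → v < ρ →
      Summable (fun p : ℕ × ℕ => |a p.1 p.2| * u ^ p.1 * v ^ p.2) := by
    intro u v hu huρ hv hvρ
    have h1 := (hg u v (by rwa [abs_of_pos hu]) (by rwa [abs_of_pos hv])).summable
    refine h1.abs.congr (fun p => ?_)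
    simp [abs_mul, abs_pow, abs_of_pos hu, abs_of_pos hv]
  -- the shifted coefficients
  set c : ℕ → ℕ → ℝ := fun i j => if i * m ≤ d + j then a i (d + j - i * m) else 0 with hc
  set c2 : ℕ → ℕ → ℝ := fun i j => c i j * s ^ i * t ^ j with hc2def
  have hc2 : Summable (fun p : ℕ × ℕ => |c2 p.1 p.2|) := by
    have hF : Summable (fun p : ℕ × ℕ =>
        (|a p.1 p.2| * (s * t ^ m) ^ p.1 * t ^ p.2) / t ^ d) :=
      (habs (s * t ^ m) t (by positivity) hstm ht htρ).div_const _
    set S : Set (ℕ × ℕ) := {p : ℕ × ℕ | p.1 * m ≤ d + p.2} with hS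
    refine (summable_subtype_and_compl (s := S)).mp ⟨?_, ?_⟩
    · have he : Function.Injective (fun q : S => ((q.1.1, d + q.1.2 - q.1.1 * m) : ℕ × ℕ)) := by
        rintro ⟨⟨i, j⟩, hij⟩ ⟨⟨i', j'⟩, hij'⟩ h
        simp only [Prod.mk.injEq] at h
        obtain ⟨h1, h2⟩ := h
        subst h1
        have hij2 : i * m ≤ d + j := hij
        have hij2' : i * m ≤ d + j' := hij'
        refine Subtype.ext (Prod.ext rfl ?_)
        simp only
        omega
      have := hF.comp_injective he
      refine this.congr (fun q => ?_)
      obtain ⟨⟨i, j⟩, hij⟩ := q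
      have hij2 : i * m ≤ d + j := hij
      simp only [Function.comp_apply]
      have hval : c2 i j = a i (d + j - i * m) * s ^ i * t ^ j := by
        rw [hc2def]; simp only; rw [hc]; simp only [if_pos hij2]
      rw [hval]
      have hiexp : m * i + (d + j - i * m) = d + j := by rw [Nat.mul_comm]; omega
      have hexp : (s * t ^ m) ^ i * t ^ (d + j - i * m) = s ^ i * (t ^ d * t ^ j) := by
        calc (s * t ^ m) ^ i * t ^ (d + j - i * m)
            = s ^ i * (t ^ (m * i) * t ^ (d + j - i * m)) := by rw [mul_pow, ← pow_mul]; ring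
          _ = s ^ i * t ^ (m * i + (d + j - i * m)) := by rw [pow_add]
          _ = s ^ i * t ^ (d + j) := by rw [hiexp]
          _ = s ^ i * (t ^ d * t ^ j) := by rw [pow_add]
      rw [abs_mul, abs_mul, abs_pow, abs_pow, abs_of_pos hs, abs_of_pos ht]
      rw [mul_assoc, hexp]
      field_simp
    · refine (summable_zero).congr (fun q => ?_)
      obtain ⟨⟨i, j⟩, hij⟩ := q
      have hij2 : ¬ (i * m ≤ d + j) := hij
      simp only [Function.comp_apply]
      rw [hc2def]; simp only; rw [hc]; simp only [if_neg hij2]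
      simp
  -- the analytic function H and the rescaling map
  set H : ℝ × ℝ → ℝ := fun x => ∑' p : ℕ × ℕ, c2 p.1 p.2 * x.1 ^ p.1 * x.2 ^ p.2 with hHdef
  have hH := aux_hasFPS c2 hc2
  set Lm : ℝ × ℝ →L[ℝ] ℝ × ℝ := (s⁻¹ • ContinuousLinearMap.fst ℝ ℝ ℝ).prod
    (t⁻¹ • ContinuousLinearMap.snd ℝ ℝ ℝ) with hLmdef
  have hLm : ∀ x : ℝ × ℝ, Lm x = (s⁻¹ * x.1, t⁻¹ * x.2) := by
    intro x
    rw [hLmdef]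
    simp [ContinuousLinearMap.prod_apply]
  set ht' : ℝ × ℝ → ℝ := fun x => H (Lm x) with htdef'
  -- pointwise sum representation of ht'
  have hsumh : ∀ x : ℝ × ℝ, |x.1| < s → |x.2| < t →
      HasSum (fun p : ℕ × ℕ => c p.1 p.2 * x.1 ^ p.1 * x.2 ^ p.2) (ht' x) := by
    intro x hx1 hx2
    have hy1 : |(Lm x).1| ≤ 1 := by
      rw [hLm]
      simp only [abs_mul, abs_inv, abs_of_pos hs]
      rw [inv_mul_le_iff₀ hs, mul_one]
      exact hx1.le
    have hy2 : |(Lm x).2| ≤ 1 := by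
      rw [hLm]
      simp only [abs_mul, abs_inv, abs_of_pos ht]
      rw [inv_mul_le_iff₀ ht, mul_one]
      exact hx2.le
    have hsum2 := (aux_summable c2 hc2 (Lm x) hy1 hy2).hasSum
    have hfe : (fun p : ℕ × ℕ => c p.1 p.2 * x.1 ^ p.1 * x.2 ^ p.2)
        = fun p : ℕ × ℕ => c2 p.1 p.2 * (Lm x).1 ^ p.1 * (Lm x).2 ^ p.2 := by
      funext p
      rw [hLm, hc2def]
      simp only [mul_pow, inv_pow]
      have hsp : (s : ℝ) ^ p.1 ≠ 0 := by positivity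
      have htp : (t : ℝ) ^ p.2 ≠ 0 := by positivity
      field_simp
    rw [hfe]
    exact hsum2
  -- analyticity of ht' at x₀
  set x₀ : ℝ × ℝ := (β₀, 0) with hx₀def
  have hana : AnalyticAt ℝ ht' x₀ := by
    have hmem : Lm x₀ ∈ EMetric.ball (0 : ℝ × ℝ) 1 := by
      rw [EMetric.ball, Metric.mem_eball, edist_zero_right]
      have hn : ‖Lm x₀‖ < 1 := by
        rw [hLm]
        rw [Prod.norm_def]
        refine max_lt ?_ ?_
        · simp only [Real.norm_eq_abs, abs_mul, abs_inv, abs_of_pos hs]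
          rw [inv_mul_lt_iff₀ hs, mul_one]
          simpa using hβ₀s
        · simp [Real.norm_eq_abs, hx₀def]
      calc (‖Lm x₀‖₊ : ℝ≥0∞) < (1 : NNReal) := by exact_mod_cast hn
        _ = 1 := by norm_num
    have h1 : AnalyticAt ℝ H (Lm x₀) := hH.analyticAt_of_mem hmem
    have h2 : AnalyticAt ℝ (⇑Lm) x₀ := Lm.analyticAt x₀
    exact h1.comp h2
  -- ht' on the line τ = 0
  have key2 : ∀ I : ℕ, 2 * m ≤ I → I ≤ d → d - I < d - m := by intro I h1 h2; omega
  have hline : ∀ β : ℝ, |β| < s → ht' (β, 0) = a 0 d + A1 * β := by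
    intro β hβ
    have h1 := hsumh (β, 0) hβ (by simpa using ht)
    have h2 : HasSum (fun p : ℕ × ℕ => c p.1 p.2 * β ^ p.1 * (0 : ℝ) ^ p.2)
        (a 0 d + A1 * β) := by
      have hne : ((0 : ℕ), (0 : ℕ)) ≠ ((1 : ℕ), (0 : ℕ)) := by simp [Prod.ext_iff]
      have h3 := hasSum_sum_of_ne_finset_zero
        (s := ({((0 : ℕ), (0 : ℕ)), ((1 : ℕ), (0 : ℕ))} : Finset (ℕ × ℕ)))
        (f := fun p : ℕ × ℕ => c p.1 p.2 * β ^ p.1 * (0 : ℝ) ^ p.2)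
        (L := SummationFilter.unconditional _) ?_
      · have h4 : ∑ p ∈ ({((0 : ℕ), (0 : ℕ)), ((1 : ℕ), (0 : ℕ))} : Finset (ℕ × ℕ)),
            c p.1 p.2 * β ^ p.1 * (0 : ℝ) ^ p.2 = a 0 d + A1 * β := by
          rw [Finset.sum_pair hne]
          have hc00 : c 0 0 = a 0 d := by rw [hc]; simp
          have hc10 : c 1 0 = A1 := by
            rw [hc]; simp only [one_mul, Nat.add_zero]
            rw [if_pos hmd, hA1]
          simp [hc00, hc10]
          try ring
        rwa [h4] at h3
      · rintro ⟨i, j⟩ hp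
        simp only [Finset.mem_insert, Finset.mem_singleton, Prod.mk.injEq, not_or] at hp
        match j, i with
        | j + 1, i => simp [pow_succ]
        | 0, 0 => exact absurd ⟨rfl, rfl⟩ hp.1
        | 0, 1 => exact absurd ⟨rfl, rfl⟩ hp.2
        | 0, i + 2 =>
          have hcz : c (i + 2) 0 = 0 := by
            rw [hc]
            simp only [Nat.add_zero]
            split
            · rename_i hle
              refine hai (i + 2) (d - (i + 2) * m) (by omega) ?_
              have h2m : 2 * m ≤ (i + 2) * m := Nat.mul_le_mul_right m (by omega)
              exact key2 ((i + 2) * m) h2m hle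
            · rfl
          simp [hcz]
    exact h1.unique h2
  have hx₀val : ht' x₀ = 0 := by
    rw [hx₀def, hline β₀ hβ₀s, hβ₀]
    field_simp
    ring
  -- the derivative of ht' at x₀
  have hdiff : DifferentiableAt ℝ ht' x₀ := hana.differentiableAt
  set Dh : ℝ × ℝ →L[ℝ] ℝ := fderiv ℝ ht' x₀ with hDhdef
  have hDh : HasFDerivAt ht' Dh x₀ := hdiff.hasFDerivAt
  have hD10 : Dh (1, 0) = A1 := by
    have hcomp := hDh.comp β₀ ((ContinuousLinearMap.inl ℝ ℝ ℝ).hasFDerivAt (x := β₀))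
    have hcompeq : ht' ∘ (ContinuousLinearMap.inl ℝ ℝ ℝ) = fun β : ℝ => ht' (β, 0) := by
      funext β; simp [ContinuousLinearMap.inl_apply]
    rw [hcompeq] at hcomp
    have hder1 : HasDerivAt (fun β : ℝ => ht' (β, 0)) (Dh (1, 0)) β₀ := by
      have h5 := hcomp.hasDerivAt
      simpa [ContinuousLinearMap.inl_apply] using h5
    have hder2 : HasDerivAt (fun β : ℝ => ht' (β, 0)) A1 β₀ := by
      have hU : {β : ℝ | |β| < s} ∈ 𝓝 β₀ :=
        (isOpen_lt continuous_abs continuous_const).mem_nhds hβ₀s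
      have hev2 : (fun β : ℝ => ht' (β, 0)) =ᶠ[𝓝 β₀] (fun β => a 0 d + A1 * β) := by
        filter_upwards [hU] with β hβ using hline β hβ
      have base : HasDerivAt (fun β : ℝ => a 0 d + A1 * β) A1 β₀ := by
        simpa using ((hasDerivAt_id β₀).const_mul A1).const_add (a 0 d)
      exact base.congr_of_eventuallyEq hev2
    exact hder1.unique hder2
  set b : ℝ := Dh (0, 1) with hbdef
  have hdec : ∀ u v : ℝ, Dh (u, v) = A1 * u + b * v := by
    intro u v
    have huv : ((u, v) : ℝ × ℝ) = u • ((1 : ℝ), (0 : ℝ)) + v • ((0 : ℝ), (1 : ℝ)) := by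
      simp [Prod.ext_iff]
    rw [huv, map_add, map_smul, map_smul, hD10]
    simp [smul_eq_mul, hbdef]
    ring
  -- the map Φ and its invertible strict derivative
  set Φ : ℝ × ℝ → ℝ × ℝ := fun x => (ht' x, x.2) with hΦdef
  set T : ℝ × ℝ →L[ℝ] ℝ × ℝ := Dh.prod (ContinuousLinearMap.snd ℝ ℝ ℝ) with hTdef
  have hstrict : HasStrictFDerivAt Φ T x₀ := by
    have h1 : HasStrictFDerivAt ht' Dh x₀ :=
      (hana.contDiffAt (n := 1)).hasStrictFDerivAt one_ne_zero
    have h2 : HasStrictFDerivAt (fun x : ℝ × ℝ => x.2)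
        (ContinuousLinearMap.snd ℝ ℝ ℝ) x₀ :=
      (ContinuousLinearMap.snd ℝ ℝ ℝ).hasStrictFDerivAt
    exact h1.prodMk h2
  set Tinv : ℝ × ℝ →L[ℝ] ℝ × ℝ :=
    (A1⁻¹ • (ContinuousLinearMap.fst ℝ ℝ ℝ - b • ContinuousLinearMap.snd ℝ ℝ ℝ)).prod
      (ContinuousLinearMap.snd ℝ ℝ ℝ) with hTinvdef
  have hTapp : ∀ x : ℝ × ℝ, T x = (Dh x, x.2) := by
    intro x; rw [hTdef]; simp [ContinuousLinearMap.prod_apply]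
  have hTinvapp : ∀ y : ℝ × ℝ, Tinv y = (A1⁻¹ * (y.1 - b * y.2), y.2) := by
    intro y; rw [hTinvdef]; simp [ContinuousLinearMap.prod_apply, smul_eq_mul]
  have hleft : ∀ x : ℝ × ℝ, Tinv (T x) = x := by
    intro x
    rw [hTapp, hTinvapp]
    simp only
    have hx : Dh x = A1 * x.1 + b * x.2 := by
      rw [← Prod.mk.eta (p := x), hdec]
    rw [hx]
    refine Prod.ext ?_ rfl
    simp only
    field_simp
    try ring
  have hright : ∀ y : ℝ × ℝ, T (Tinv y) = y := by
    intro y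
    rw [hTinvapp, hTapp]
    simp only
    rw [hdec]
    refine Prod.ext ?_ rfl
    simp only
    field_simp
    ring
  set e : (ℝ × ℝ) ≃L[ℝ] (ℝ × ℝ) := ContinuousLinearEquiv.equivOfInverse T Tinv hleft hright
    with hedef
  have hecoe : (e : (ℝ × ℝ) →L[ℝ] (ℝ × ℝ)) = T := rfl
  have hstrict' : HasStrictFDerivAt Φ (e : (ℝ × ℝ) →L[ℝ] (ℝ × ℝ)) x₀ := by
    rw [hecoe]; exact hstrict
  set Γ : OpenPartialHomeomorph (ℝ × ℝ) (ℝ × ℝ) := hstrict'.toOpenPartialHomeomorph Φ with hΓdef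
  have hΓcoe : ⇑Γ = Φ := hstrict'.toOpenPartialHomeomorph_coe
  have hΓsrc : x₀ ∈ Γ.source := hstrict'.mem_toOpenPartialHomeomorph_source
  have hΓx₀ : Γ x₀ = ((0 : ℝ), (0 : ℝ)) := by
    rw [hΓcoe, hΦdef]
    rw [hx₀def] at hx₀val
    simp [hx₀val, hx₀def]
  have hsymm_ana : AnalyticAt ℝ (⇑Γ.symm) ((0 : ℝ), (0 : ℝ)) := by
    have hΦana : AnalyticAt ℝ Φ x₀ := by
      have h2 : AnalyticAt ℝ (fun x : ℝ × ℝ => x.2) x₀ :=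
        (ContinuousLinearMap.snd ℝ ℝ ℝ).analyticAt x₀
      exact hana.prod h2
    have h' : fderiv ℝ (⇑Γ) x₀ = (e : (ℝ × ℝ) →L[ℝ] (ℝ × ℝ)) := by
      rw [hΓcoe]; exact hstrict'.hasFDerivAt.fderiv
    have hres := Γ.analyticAt_symm' hΓsrc (by rw [hΓcoe]; exact hΦana) h'
    rwa [hΓx₀] at hres
  -- local data around the origin
  have hsymm00 : Γ.symm ((0 : ℝ), (0 : ℝ)) = x₀ := by rw [← hΓx₀]; exact Γ.left_inv hΓsrc
  have h00target : ((0 : ℝ), (0 : ℝ)) ∈ Γ.target := by rw [← hΓx₀]; exact Γ.map_source hΓsrc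
  have hSymmCont : ContinuousAt (⇑Γ.symm) ((0 : ℝ), (0 : ℝ)) :=
    Γ.symm.continuousAt (by rw [OpenPartialHomeomorph.symm_source]; exact h00target)
  set ι : ℝ → ℝ × ℝ := fun τ => ((0 : ℝ), τ) with hιdef
  have hι : Continuous ι := continuous_const.prodMk continuous_id
  have hιt : Filter.Tendsto ι (𝓝 0) (𝓝 ((0 : ℝ), (0 : ℝ))) := hι.continuousAt
  have P1 : ∀ᶠ τ in 𝓝 (0 : ℝ), AnalyticAt ℝ (⇑Γ.symm) (ι τ) :=
    hιt.eventually hsymm_ana.eventually_analyticAt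
  have P2 : ∀ᶠ τ in 𝓝 (0 : ℝ), ι τ ∈ Γ.target :=
    hιt.eventually (Γ.open_target.eventually_mem h00target)
  have P3 : ∀ᶠ τ in 𝓝 (0 : ℝ), |(Γ.symm (ι τ)).1| < s := by
    have hc0 : ContinuousAt (fun τ : ℝ => (Γ.symm (ι τ)).1) 0 :=
      (continuous_fst.continuousAt).comp (hSymmCont.comp hι.continuousAt)
    have hev3 : ∀ᶠ z in 𝓝 ((fun τ : ℝ => (Γ.symm (ι τ)).1) 0), |z| < s := by
      have : (fun τ : ℝ => (Γ.symm (ι τ)).1) 0 = β₀ := by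
        show (Γ.symm ((0 : ℝ), (0 : ℝ))).1 = β₀
        rw [hsymm00]
      rw [this]
      exact (isOpen_lt continuous_abs continuous_const).eventually_mem hβ₀s
    exact hc0.eventually hev3
  have P4 : ∀ᶠ τ in 𝓝 (0 : ℝ), |τ| < t :=
    (isOpen_lt continuous_abs continuous_const).eventually_mem (by simpa using ht)
  have hall := (P1.and P2).and (P3.and P4)
  rw [Metric.eventually_nhds_iff] at hall
  obtain ⟨ε, hε, hev⟩ := hall
  set η : ℝ → ℝ := fun τ => (Γ.symm ((0 : ℝ), τ)).1 with hηdef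
  have hη0 : η 0 = β₀ := by
    show (Γ.symm ((0 : ℝ), (0 : ℝ))).1 = β₀
    rw [hsymm00]
  have hAna : AnalyticOnNhd ℝ η (Set.Ioo (-ε) ε) := by
    intro τ hτ
    have hdist : dist τ 0 < ε := by
      rw [Real.dist_eq, sub_zero]; exact abs_lt.mpr ⟨hτ.1, hτ.2⟩
    obtain ⟨⟨q1, q2⟩, q3, q4⟩ := hev hdist
    have h2 := (ContinuousLinearMap.inr ℝ ℝ ℝ).analyticAt τ
    have q1' : AnalyticAt ℝ (⇑Γ.symm) ((ContinuousLinearMap.inr ℝ ℝ ℝ) τ) := by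
      simpa [hιdef] using q1
    have h3 : AnalyticAt ℝ (⇑Γ.symm ∘ ⇑(ContinuousLinearMap.inr ℝ ℝ ℝ)) τ := q1'.comp h2
    have h4 := ((ContinuousLinearMap.fst ℝ ℝ ℝ).analyticAt
      ((⇑Γ.symm ∘ ⇑(ContinuousLinearMap.inr ℝ ℝ ℝ)) τ)).comp h3
    have hfeq : (⇑(ContinuousLinearMap.fst ℝ ℝ ℝ) ∘
        (⇑Γ.symm ∘ ⇑(ContinuousLinearMap.inr ℝ ℝ ℝ))) = η := by
      funext u
      simp [hηdef]
    rwa [hfeq] at h4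
  refine ⟨ε, hε, η, hAna, hη0, ?_, ?_⟩
  · -- the root property
    intro τ hτε
    by_cases hτ0 : τ = 0
    · subst hτ0
      have hz0 : η 0 * (0 : ℝ) ^ m = 0 := by
        rw [zero_pow (by omega : m ≠ 0), mul_zero]
      rw [hz0]
      have h00 := hg 0 0 (by simpa using hρ) (by simpa using hρ)
      have hzf : (fun p : ℕ × ℕ => a p.1 p.2 * (0 : ℝ) ^ p.1 * (0 : ℝ) ^ p.2)
          = fun _ => (0 : ℝ) := by
        funext p
        obtain ⟨i, k⟩ := p
        match i, k with
        | 0, 0 => simp [ha0 0 (by omega)]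
        | 0, k + 1 => simp [pow_succ]
        | i + 1, k => simp [pow_succ]
      rw [hzf] at h00
      exact h00.unique hasSum_zero
    · obtain ⟨⟨q1, q2⟩, q3, q4⟩ := hev (by rw [Real.dist_eq, sub_zero]; exact hτε)
      have hΓΓ : Γ (Γ.symm ((0 : ℝ), τ)) = ((0 : ℝ), τ) := Γ.right_inv q2
      rw [hΓcoe] at hΓΓ
      have hh0 : ht' (Γ.symm ((0 : ℝ), τ)) = 0 := congrArg Prod.fst hΓΓ
      have h2nd : (Γ.symm ((0 : ℝ), τ)).2 = τ := congrArg Prod.snd hΓΓ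
      have hpt : Γ.symm ((0 : ℝ), τ) = (η τ, τ) := Prod.ext rfl h2nd
      have hroot : ht' (η τ, τ) = 0 := by rw [← hpt]; exact hh0
      have hβs : |η τ| < s := q3
      have hτt : |τ| < t := q4
      have hW : HasSum (fun p : ℕ × ℕ => c p.1 p.2 * (η τ) ^ p.1 * τ ^ p.2) 0 := by
        have := hsumh (η τ, τ) hβs hτt
        rwa [hroot] at this
      have hF2 : HasSum (fun p : ℕ × ℕ => τ ^ d * (c p.1 p.2 * (η τ) ^ p.1 * τ ^ p.2)) 0 := by
        simpa using hW.mul_left (τ ^ d)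
      set G : ℕ × ℕ → ℝ := fun q =>
        if d ≤ q.2 then τ ^ d * (c q.1 (q.2 - d) * (η τ) ^ q.1 * τ ^ (q.2 - d)) else 0 with hGdef
      have hGsum : HasSum G 0 := by
        have hinj : Function.Injective (fun p : ℕ × ℕ => ((p.1, p.2 + d) : ℕ × ℕ)) := by
          rintro ⟨i, j⟩ ⟨i', j'⟩ h
          simp only [Prod.mk.injEq] at h
          exact Prod.ext h.1 (by omega)
        have hvan : ∀ q ∉ Set.range (fun p : ℕ × ℕ => ((p.1, p.2 + d) : ℕ × ℕ)), G q = 0 := by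
          intro q hq
          rw [hGdef]
          simp only
          rw [if_neg]
          intro hdq
          exact hq ⟨(q.1, q.2 - d), Prod.ext rfl (by simp; omega)⟩
        have hcompeq : (G ∘ fun p : ℕ × ℕ => ((p.1, p.2 + d) : ℕ × ℕ))
            = fun p : ℕ × ℕ => τ ^ d * (c p.1 p.2 * (η τ) ^ p.1 * τ ^ p.2) := by
          funext p
          simp only [Function.comp_apply, hGdef]
          rw [if_pos (by omega)]
          simp
        exact (hinj.hasSum_iff hvan).mp (by rw [hcompeq]; exact hF2)
      have hterm : HasSum (fun p : ℕ × ℕ => a p.1 p.2 * (η τ * τ ^ m) ^ p.1 * τ ^ p.2) 0 := by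
        have hinj1 : Function.Injective (fun p : ℕ × ℕ => ((p.1, p.1 * m + p.2) : ℕ × ℕ)) := by
          rintro ⟨i, j⟩ ⟨i', j'⟩ h
          simp only [Prod.mk.injEq] at h
          obtain ⟨h1, h2⟩ := h
          subst h1
          exact Prod.ext rfl (by omega)
        have hvan1 : ∀ q ∉ Set.range (fun p : ℕ × ℕ => ((p.1, p.1 * m + p.2) : ℕ × ℕ)),
            G q = 0 := by
          intro q hq
          have hqlt : q.2 < q.1 * m := by
            by_contra hcon
            push_neg at hcon
            exact hq ⟨(q.1, q.2 - q.1 * m), Prod.ext rfl (by simp; omega)⟩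
          rw [hGdef]
          simp only
          split
          · rename_i hdq
            have hcz : c q.1 (q.2 - d) = 0 := by
              rw [hc]
              simp only
              rw [if_neg (by omega)]
            rw [hcz]
            ring
          · rfl
        have hcompeq1 : (G ∘ fun p : ℕ × ℕ => ((p.1, p.1 * m + p.2) : ℕ × ℕ))
            = fun p : ℕ × ℕ => a p.1 p.2 * (η τ * τ ^ m) ^ p.1 * τ ^ p.2 := by
          funext p
          obtain ⟨i, k⟩ := p
          simp only [Function.comp_apply, hGdef]
          by_cases hd : d ≤ i * m + k
          · rw [if_pos hd]
            have hcval : c i (i * m + k - d) = a i k := by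
              rw [hc]
              simp only
              rw [if_pos (by omega)]
              congr 1
              omega
            rw [hcval]
            have hzt : τ ^ d * τ ^ (i * m + k - d) = τ ^ (i * m + k) := by
              rw [← pow_add]
              congr 1
              omega
            have hmp : (η τ * τ ^ m) ^ i = η τ ^ i * τ ^ (m * i) := by
              rw [mul_pow, ← pow_mul]
            rw [hmp]
            have hzt2 : τ ^ (m * i) * τ ^ k = τ ^ (i * m + k) := by
              rw [← pow_add]
              congr 1
              rw [Nat.mul_comm]
            calc τ ^ d * (a i k * η τ ^ i * τ ^ (i * m + k - d))
                = a i k * η τ ^ i * (τ ^ d * τ ^ (i * m + k - d)) := by ring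
              _ = a i k * η τ ^ i * τ ^ (i * m + k) := by rw [hzt]
              _ = a i k * η τ ^ i * (τ ^ (m * i) * τ ^ k) := by rw [hzt2]
              _ = a i k * (η τ ^ i * τ ^ (m * i)) * τ ^ k := by ring
          · rw [if_neg hd]
            have hak : a i k = 0 := by
              rcases Nat.eq_zero_or_pos i with hi0 | hip
              · subst hi0
                exact ha0 k (by omega)
              · have hmi : m ≤ i * m := Nat.le_mul_of_pos_left m hip
                exact hai i k hip (by omega)
            rw [hak]
            ring
        exact hcompeq1 ▸ ((hinj1.hasSum_iff hvan1).mpr hGsum)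
      have habsτ : |η τ * τ ^ m| < ρ := by
        have h1 : |η τ * τ ^ m| = |η τ| * |τ| ^ m := by rw [abs_mul, abs_pow]
        have h2 : |τ| ^ m ≤ t ^ m := pow_le_pow_left₀ (abs_nonneg τ) hτt.le m
        have h3 : |η τ| * |τ| ^ m < s * t ^ m := by
          refine lt_of_le_of_lt (mul_le_mul_of_nonneg_left h2 (abs_nonneg _)) ?_
          exact mul_lt_mul_of_pos_right hβs (by positivity)
        rw [h1]
        exact h3.trans hstm
      have hgsum := hg (η τ * τ ^ m) τ habsτ (hτt.trans htρ)
      exact hgsum.unique hterm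
  · -- the big-O estimate
    have hη0ana : AnalyticAt ℝ η 0 := hAna 0 ⟨by linarith, hε⟩
    have hO1 : (fun τ : ℝ => η τ - η 0) =O[𝓝 0] (fun τ : ℝ => τ - 0) :=
      hη0ana.differentiableAt.hasFDerivAt.isBigO_sub
    have hO2 : (fun τ : ℝ => τ ^ m) =O[𝓝 0] (fun τ : ℝ => τ ^ m) :=
      Asymptotics.isBigO_refl _ _
    have hO := hO1.mul hO2
    have hfun1 : (fun τ : ℝ => η τ * τ ^ m - β₀ * τ ^ m)
        = (fun τ : ℝ => (η τ - η 0) * τ ^ m) := by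
      funext τ
      rw [hη0]
      ring
    have hfun2 : (fun τ : ℝ => (τ - 0) * τ ^ m) = fun τ : ℝ => τ ^ (m + 1) := by
      funext τ
      rw [sub_zero, pow_succ]
      ring
    rw [hfun1, ← hfun2]
    exact hO
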